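/- If a graph G on an even number n of vertices has a Hamiltonian path, then E(G) ≥ n. -/

import Mathlib

open Finset Matrix

noncomputable section

variable {V : Type*} [Fintype V] [DecidableEq V]

/-- The adjacency matrix of a simple graph is Hermitian (over ℝ). -/
theorem SimpleGraph.isHermitian_adjMatrix' (G : SimpleGraph V) [DecidableRel G.Adj] :
    (G.adjMatrix ℝ).IsHermitian := by
  rw [Matrix.IsHermitian, Matrix.conjTranspose_eq_transpose_of_trivial]
  exact G.isSymm_adjMatrix

/-- The energy of a graph: the sum of the absolute values of the
eigenvalues of its adjacency matrix. -/
def SimpleGraph.energy (G : SimpleGraph V) [DecidableRel G.Adj] : ℝ :=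
  ∑ k, |G.isHermitian_adjMatrix'.eigenvalues k|

/-- The Randić index of a graph: the sum over the (unordered) edges `(i,j)`
of `1/√(deg i · deg j)`. -/
def SimpleGraph.randic (G : SimpleGraph V) [DecidableRel G.Adj] : ℝ :=
  ∑ e ∈ G.edgeFinset,
    Sym2.lift ⟨fun i j => 1 / Real.sqrt (G.degree i * G.degree j),
      fun i j => by simp [mul_comm]⟩ e

end

/-- If there is a permutation `σ` of the vertices with `i ~ σ i` for every `i`, then the
energy of the graph is at least the number of vertices. -/
theorem card_le_energy_aux {V : Type*} [Fintype V] [DecidableEq V]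
    (G : SimpleGraph V) [DecidableRel G.Adj]
    (σ : V → V) (hb : Function.Bijective σ) (ha : ∀ i, G.Adj i (σ i)) :
    (Fintype.card V : ℝ) ≤ G.energy := by
  classical
  set hA := G.isHermitian_adjMatrix'
  set U : Matrix V V ℝ := (hA.eigenvectorUnitary : Matrix V V ℝ) with hU
  set lam : V → ℝ := hA.eigenvalues with hlam
  -- entrywise spectral theorem
  have hentry : ∀ i j, G.adjMatrix ℝ i j = ∑ k, U i k * lam k * U j k := by
    intro i j
    conv_lhs => rw [hA.spectral_theorem, Unitary.conjStarAlgAut_apply]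
    rw [Matrix.mul_apply]
    refine Finset.sum_congr rfl fun k _ => ?_
    rw [Matrix.mul_diagonal]
    simp [hU, hlam, Matrix.star_apply]
  -- columns of U are unit vectors
  have hcol : ∀ k, ∑ i, U i k ^ 2 = 1 := by
    intro k
    have h1 : star U * U = 1 := Matrix.mem_unitaryGroup_iff'.mp hA.eigenvectorUnitary.2
    have := congrFun (congrFun h1 k) k
    rw [Matrix.mul_apply] at this
    simpa [Matrix.star_apply, sq] using this
  have hcolσ : ∀ k, ∑ i, U (σ i) k ^ 2 = 1 := by
    intro k
    rw [Fintype.sum_bijective σ hb (fun i => U (σ i) k ^ 2) (fun j => U j k ^ 2)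
      (fun _ => rfl)]
    exact hcol k
  set d : V → ℝ := fun k => ∑ i, U i k * U (σ i) k with hd
  have hdle : ∀ k, |d k| ≤ 1 := by
    intro k
    have hcs := Finset.sum_mul_sq_le_sq_mul_sq Finset.univ (fun i => U i k)
      (fun i => U (σ i) k)
    rw [hcol k, hcolσ k] at hcs
    nlinarith [abs_nonneg (d k), sq_abs (d k)]
  have hsum : (Fintype.card V : ℝ) = ∑ k, lam k * d k := by
    have h1 : ∀ i, G.adjMatrix ℝ i (σ i) = 1 := fun i => by simp [ha i]
    have h2 : (Fintype.card V : ℝ) = ∑ i, G.adjMatrix ℝ i (σ i) := by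
      simp only [h1]
      simp
    rw [h2]
    simp_rw [hentry]
    rw [Finset.sum_comm]
    refine Finset.sum_congr rfl fun k _ => ?_
    rw [Finset.mul_sum]
    exact Finset.sum_congr rfl fun i _ => by ring
  rw [hsum]
  calc ∑ k, lam k * d k ≤ ∑ k, |lam k * d k| :=
        Finset.sum_le_sum fun k _ => le_abs_self _
    _ ≤ ∑ k, |lam k| := by
        refine Finset.sum_le_sum fun k _ => ?_
        rw [abs_mul]
        exact mul_le_of_le_one_right (abs_nonneg _) (hdle k)
    _ = G.energy := rfl

/-- If a graph `G` on an even number `n` of vertices has a Hamiltonian path, then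
`E(G) ≥ n`. -/
theorem stmt11 {n : ℕ} (hn : Even n)
    (G : SimpleGraph (Fin n)) [DecidableRel G.Adj]
    (u v : Fin n) (w : G.Walk u v) (hw : w.IsHamiltonian) :
    (n : ℝ) ≤ G.energy := by
  classical
  have hn0 : 0 < n := u.pos
  have hn2 : n % 2 = 0 := Nat.even_iff.mp hn
  set L := w.support with hL
  have nd : L.Nodup := hw.isPath.support_nodup
  have mem : ∀ x, x ∈ L := hw.mem_support
  have hlen : L.length = n := by
    rw [hL, SimpleGraph.Walk.length_support, hw.length_eq, Fintype.card_fin]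
    omega
  -- the equivalence sending an index to the corresponding vertex on the path
  let g : Fin n ≃ Fin n := (finCongr hlen.symm).trans (nd.getEquivOfForallMemList L mem)
  have hg : ∀ k : Fin n, g k = L.get ⟨k.val, by omega⟩ := fun k => rfl
  have hchain := List.isChain_iff_getElem.mp w.isChain_adj_support
  have key : ∀ a b : Fin n, (b : ℕ) = (a : ℕ) + 1 → G.Adj (g a) (g b) := by
    intro a b hab
    rw [hg a, hg b]
    have hlt : (a : ℕ) < L.length - 1 := by have := b.isLt; omega
    have h := hchain a (by rw [← hL]; omega)
    convert h using 2
    all_goals simp [hL, hab]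
  -- pairing consecutive indices
  have hpairmem : ∀ k : Fin n, (if k.val % 2 = 0 then k.val + 1 else k.val - 1) < n := by
    intro k
    have := k.isLt
    by_cases h : k.val % 2 = 0 <;> simp [h] <;> omega
  set pair : Fin n → Fin n := fun k =>
    ⟨if k.val % 2 = 0 then k.val + 1 else k.val - 1, hpairmem k⟩ with hpairdef
  have hpinv : Function.Involutive pair := by
    intro k
    have hk := k.isLt
    apply Fin.ext
    simp only [hpairdef]
    split_ifs <;> omega
  -- the matching permutation
  set σ : Fin n → Fin n := fun i => g (pair (g.symm i)) with hσ
  have hb : Function.Bijective σ :=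
    g.bijective.comp (hpinv.bijective.comp g.symm.bijective)
  have ha : ∀ i, G.Adj i (σ i) := by
    intro i
    obtain ⟨k, rfl⟩ := g.surjective i
    have hs : σ (g k) = g (pair k) := by rw [hσ]; simp
    rw [hs]
    by_cases h : k.val % 2 = 0
    · refine key k (pair k) ?_
      simp [hpairdef, h]
    · have hpv : (pair k).val = k.val - 1 := by simp [hpairdef, h]
      refine (key (pair k) k ?_).symm
      omega
  have := card_le_energy_aux G σ hb ha
  rwa [Fintype.card_fin] at this
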